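/- (Deterministic per-step inequality for projected gradient ascent.) Let C ⊆ ℝ^n be a nonempty closed convex set, x, x* ∈ C, g ∈ ℝ^n with ‖g‖ ≤ G, η > 0, and let x⁺ = P_C(x + η·g) be the Euclidean projection of x + η·g onto C. Suppose F : ℝ^n → ℝ is differentiable and satisfies F(x*) − 2F(x) ≤ ⟨∇F(x), x* − x⟩. Then: F(x*) − 2F(x) ≤ (η/2)·G² + (1/(2η))·(‖x − x*‖² − ‖x⁺ − x*‖²) + ⟨x − x*, g − ∇F(x)⟩. -/

import Mathlib

/-- **Deterministic per-step inequality for projected gradient ascent.**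
With `x⁺` the Euclidean projection of `x + η·g` onto the closed convex set `C`
(characterized by `x⁺ ∈ C` and `‖x⁺ - c‖ ≤ ‖(x + η·g) - c‖` for all `c ∈ C`),
`‖g‖ ≤ G`, and `F(x*) - 2F(x) ≤ ⟨∇F(x), x* - x⟩`:
`F(x*) - 2F(x) ≤ (η/2)G² + (1/(2η))(‖x - x*‖² - ‖x⁺ - x*‖²) + ⟨x - x*, g - ∇F(x)⟩`. -/
theorem pga_per_step_inequality
    {n : ℕ} (C : Set (EuclideanSpace ℝ (Fin n)))
    (hCne : C.Nonempty) (hCclosed : IsClosed C) (hCconv : Convex ℝ C)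
    (x xstar : EuclideanSpace ℝ (Fin n)) (hx : x ∈ C) (hxstar : xstar ∈ C)
    (g : EuclideanSpace ℝ (Fin n)) (G : ℝ) (hg : ‖g‖ ≤ G)
    (η : ℝ) (hη : 0 < η)
    (xplus : EuclideanSpace ℝ (Fin n)) (hxplusMem : xplus ∈ C)
    (hxplusProj : ∀ c ∈ C, ‖xplus - c‖ ≤ ‖(x + η • g) - c‖)
    (F : EuclideanSpace ℝ (Fin n) → ℝ)
    (gradFx : EuclideanSpace ℝ (Fin n))
    (hgrad : HasGradientAt F gradFx x)
    (hDR : F xstar - 2 * F x ≤ (inner ℝ gradFx (xstar - x) : ℝ)) :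
    F xstar - 2 * F x ≤ (η / 2) * G ^ 2
      + (1 / (2 * η)) * (‖x - xstar‖ ^ 2 - ‖xplus - xstar‖ ^ 2)
      + (inner ℝ (x - xstar) (g - gradFx) : ℝ) := by
  have hproj := hxplusProj xstar hxstar
  have hsq : ‖xplus - xstar‖ ^ 2 ≤ ‖(x + η • g) - xstar‖ ^ 2 := by
    have := norm_nonneg (xplus - xstar)
    nlinarith [norm_nonneg ((x + η • g) - xstar)]
  have hrw : (x + η • g) - xstar = (x - xstar) + η • g := by abel
  have hexp : ‖(x + η • g) - xstar‖ ^ 2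
      = ‖x - xstar‖ ^ 2 + 2 * (η * (inner ℝ (x - xstar) g : ℝ)) + η ^ 2 * ‖g‖ ^ 2 := by
    rw [hrw, @norm_add_sq_real, real_inner_smul_right, norm_smul]
    simp [abs_of_pos hη, mul_pow]
  have h1 : (inner ℝ gradFx (xstar - x) : ℝ) = - (inner ℝ (x - xstar) gradFx : ℝ) := by
    rw [real_inner_comm]
    simp [inner_sub_left]
  have h2 : (inner ℝ (x - xstar) (g - gradFx) : ℝ)
      = (inner ℝ (x - xstar) g : ℝ) - (inner ℝ (x - xstar) gradFx : ℝ) := by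
    simp [inner_sub_right]
  have hG0 : (0:ℝ) ≤ ‖g‖ := norm_nonneg g
  have key : (1 / (2 * η)) * (‖x - xstar‖ ^ 2 - ‖xplus - xstar‖ ^ 2)
      ≥ - (inner ℝ (x - xstar) g : ℝ) - (η / 2) * ‖g‖ ^ 2 := by
    rw [ge_iff_le, one_div, inv_mul_eq_div, le_div_iff₀ (by positivity : (0:ℝ) < 2 * η)]
    nlinarith
  have hg2 : ‖g‖ ^ 2 ≤ G ^ 2 := by nlinarith
  have hGg : η / 2 * ‖g‖ ^ 2 ≤ η / 2 * G ^ 2 :=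
    mul_le_mul_of_nonneg_left hg2 (by positivity)
  linarith [key, hDR, hGg]
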